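/- arXiv:0806.3297 — 2 statements merged into one kernel-verified Lean document; each statement's English description precedes it below -/
import Mathlib

section
/- Let Q ⊂ ℂ be a convex open set, φ : Q → ℂ analytic with |φ'(z) + 1| ≤ ε < 1/2 on Q, and e ∈ Q with φ(e) = 0. Then for every z ∈ Q with Re(z − e) < 0 and |Im(z − e)| ≤ |Re(z − e)|, one has Re φ(z) ≥ (1 − 2ε)|Re(z − e)| > 0; in particular φ(z) ∉ −S where S = {w ∈ ℂ : Re w ≥ 0, |Im w| ≤ (1/3) Re w}. -/
theorem stmt_8 (Q : Set ℂ) (hQo : IsOpen Q) (hQc : Convex ℝ Q)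
    (φ : ℂ → ℂ) (hφ : DifferentiableOn ℂ φ Q)
    (ε : ℝ) (hε0 : 0 ≤ ε) (hε : ε < 1/2)
    (hd : ∀ z ∈ Q, ‖deriv φ z + 1‖ ≤ ε)
    (e : ℂ) (he : e ∈ Q) (hφe : φ e = 0) :
    ∀ z ∈ Q, (z - e).re < 0 → |(z - e).im| ≤ |(z - e).re| →
      (1 - 2 * ε) * |(z - e).re| ≤ (φ z).re ∧ 0 < (φ z).re ∧
      ¬ (0 ≤ (-(φ z)).re ∧ |(-(φ z)).im| ≤ (1/3) * (-(φ z)).re) := by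
  intro z hz hre him
  set g : ℂ → ℂ := fun w => φ w + (w - e) with hg
  have hgdiff : ∀ w ∈ Q, DifferentiableAt ℂ g w := by
    intro w hw
    exact ((hφ.differentiableAt (hQo.mem_nhds hw)).add (by fun_prop))
  have hgderiv : ∀ w ∈ Q, deriv g w = deriv φ w + 1 := by
    intro w hw
    have h1 := (hφ.differentiableAt (hQo.mem_nhds hw)).hasDerivAt
    have h2 : HasDerivAt (fun w : ℂ => w - e) 1 w := (hasDerivAt_id w).sub_const e
    exact (h1.add h2).deriv
  have hbound : ∀ w ∈ Q, ‖deriv g w‖ ≤ ε := by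
    intro w hw; rw [hgderiv w hw]; exact hd w hw
  have key : ‖g z - g e‖ ≤ ε * ‖z - e‖ :=
    hQc.norm_image_sub_le_of_norm_deriv_le hgdiff hbound he hz
  have hge : g e = 0 := by simp [hg, hφe]
  have key' : ‖φ z + (z - e)‖ ≤ ε * ‖z - e‖ := by
    simpa [hg, hge, hφe] using key
  have hnorm : ‖z - e‖ ≤ 2 * |(z - e).re| := by
    calc ‖z - e‖ ≤ |(z - e).re| + |(z - e).im| := Complex.norm_le_abs_re_add_abs_im _
    _ ≤ 2 * |(z - e).re| := by linarith
  have hre2 : |(φ z + (z - e)).re| ≤ ε * ‖z - e‖ :=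
    le_trans (Complex.abs_re_le_norm _) key'
  have hre3 : |(φ z).re + (z - e).re| ≤ ε * (2 * |(z - e).re|) := by
    refine le_trans ?_ (le_trans hre2 (by nlinarith))
    simp [Complex.add_re]
  have habs : |(z - e).re| = -(z - e).re := abs_of_neg hre
  have h1 : (1 - 2 * ε) * |(z - e).re| ≤ (φ z).re := by
    rw [habs] at hre3 ⊢
    rw [abs_le] at hre3
    nlinarith
  have hpos : 0 < (φ z).re := by
    have : 0 < (1 - 2 * ε) * |(z - e).re| := by
      apply mul_pos (by linarith) (abs_pos.mpr (ne_of_lt hre))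
    linarith
  refine ⟨h1, hpos, ?_⟩
  rintro ⟨h, -⟩
  simp only [Complex.neg_re] at h
  linarith
end

section
/- Let H be a complex Hilbert space, π, π̄ bounded self-adjoint operators with π² + π̄² = 1, T a bounded operator commuting with π and π̄, W bounded, and suppose H_π̄ := T + π̄Wπ̄ is boundedly invertible. Define F := T + πWπ − πWπ̄(H_π̄)^{-1}π̄Wπ. If ψ ∈ H satisfies (T + W)ψ = 0, then φ := πψ satisfies Fφ = 0. -/
theorem stmt_12 {H : Type*} [NormedAddCommGroup H] [InnerProductSpace ℂ H] [CompleteSpace H]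
    (π πbar T W R : H →L[ℂ] H)
    (hπ : IsSelfAdjoint π) (hπbar : IsSelfAdjoint πbar)
    (hpart : π * π + πbar * πbar = 1)
    (hTπ : T * π = π * T) (hTπbar : T * πbar = πbar * T)
    (hR1 : (T + πbar * W * πbar) * R = 1) (hR2 : R * (T + πbar * W * πbar) = 1)
    (ψ : H) (hψ : (T + W) ψ = 0) :
    (T + π * W * π - π * W * πbar * R * πbar * W * π) (π ψ) = 0 := by
  have hW : W ψ = - T ψ := by
    have h := hψ
    rw [ContinuousLinearMap.add_apply] at h
    exact eq_neg_of_add_eq_zero_right h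
  have hpartψ : πbar (πbar ψ) = ψ - π (π ψ) := by
    have h := DFunLike.congr_fun hpart ψ
    simp only [ContinuousLinearMap.add_apply, ContinuousLinearMap.mul_apply,
      ContinuousLinearMap.one_apply] at h
    exact eq_sub_of_add_eq' h
  have hTb : ∀ x, T (πbar x) = πbar (T x) := fun x => by
    have h := DFunLike.congr_fun hTπbar x
    simpa [ContinuousLinearMap.mul_apply] using h
  have hTp : ∀ x, T (π x) = π (T x) := fun x => by
    have h := DFunLike.congr_fun hTπ x
    simpa [ContinuousLinearMap.mul_apply] using h
  have h1 : (T + πbar * W * πbar) (πbar ψ) = -(πbar (W (π (π ψ)))) := by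
    simp only [ContinuousLinearMap.add_apply, ContinuousLinearMap.mul_apply]
    rw [hTb, hpartψ, map_sub, map_sub, hW]
    simp only [map_neg]
    abel
  have h2 : R (πbar (W (π (π ψ)))) = -(πbar ψ) := by
    have h := DFunLike.congr_fun hR2 (πbar ψ)
    simp only [ContinuousLinearMap.mul_apply, ContinuousLinearMap.one_apply] at h
    rw [h1, map_neg] at h
    exact neg_eq_iff_eq_neg.mp h
  simp only [ContinuousLinearMap.sub_apply, ContinuousLinearMap.add_apply,
    ContinuousLinearMap.mul_apply]
  rw [h2, map_neg, hpartψ]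
  simp only [map_neg, map_sub, hW, hTp ψ]
  abel
end
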